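/- Let c ∈ ℝ with c + 1 > 0 and fix r₀, R₀ > 0. Then there exist C₁, C₂ > 0 such that for all r ∈ [0, r₀] and all y ∈ [0, R₀], C₂ r^{N+1+c⁺} ≤ V((x,y), r) ≤ C₁ r^{N+1−c⁻}, where c⁺ = max(c,0) and c⁻ = max(−c, 0). -/

import Mathlib

open MeasureTheory Set


private lemma rpow_superadd {x y p : ℝ} (hx : 0 ≤ x) (hy : 0 ≤ y) (hp : 1 ≤ p) :
    x ^ p + y ^ p ≤ (x + y) ^ p := by
  have hp1 : (0:ℝ) ≤ p - 1 := by linarith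
  have hxy : (0:ℝ) ≤ x + y := by linarith
  have hpne : (1:ℝ) + (p - 1) ≠ 0 := by
    rw [show (1:ℝ) + (p - 1) = p by ring]; linarith
  have key : ∀ z : ℝ, 0 ≤ z → z ≤ x + y → z ^ p ≤ z * (x + y) ^ (p - 1) := by
    intro z hz hzxy
    calc z ^ p = z ^ ((1:ℝ) + (p - 1)) := by norm_num
      _ = z ^ (1:ℝ) * z ^ (p - 1) := Real.rpow_add' hz hpne
      _ = z * z ^ (p - 1) := by rw [Real.rpow_one]
      _ ≤ z * (x + y) ^ (p - 1) :=
          mul_le_mul_of_nonneg_left (Real.rpow_le_rpow hz hzxy hp1) hz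
  calc x ^ p + y ^ p ≤ x * (x+y)^(p-1) + y * (x+y)^(p-1) :=
        add_le_add (key x hx (by linarith)) (key y hy (by linarith))
    _ = (x + y) ^ (1:ℝ) * (x + y) ^ (p - 1) := by rw [Real.rpow_one]; ring
    _ = (x + y) ^ ((1:ℝ) + (p - 1)) := (Real.rpow_add' hxy hpne).symm
    _ = (x + y) ^ p := by norm_num

private lemma rpow_subadd {x y p : ℝ} (hx : 0 ≤ x) (hy : 0 ≤ y) (hp0 : 0 < p) (hp : p ≤ 1) :
    (x + y) ^ p ≤ x ^ p + y ^ p := by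
  have hpne : (1:ℝ) + (p - 1) ≠ 0 := by
    rw [show (1:ℝ) + (p - 1) = p by ring]; linarith
  rcases eq_or_lt_of_le hx with h | hxpos
  · simp [← h, Real.zero_rpow hp0.ne']
  rcases eq_or_lt_of_le hy with h | hypos
  · simp [← h, Real.zero_rpow hp0.ne']
  have key : ∀ z : ℝ, 0 < z → z ^ (1:ℝ) * z ^ (p - 1) = z ^ p := by
    intro z hz
    rw [← Real.rpow_add' hz.le hpne]; norm_num
  calc (x + y) ^ p = (x + y) ^ (1:ℝ) * (x + y) ^ (p - 1) := (key _ (by linarith)).symm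
    _ = x * (x+y)^(p-1) + y * (x+y)^(p-1) := by rw [Real.rpow_one]; ring
    _ ≤ x * x^(p-1) + y * y^(p-1) := by
        refine add_le_add (mul_le_mul_of_nonneg_left ?_ hx)
          (mul_le_mul_of_nonneg_left ?_ hy)
        · exact Real.rpow_le_rpow_of_nonpos hxpos (by linarith) (by linarith)
        · exact Real.rpow_le_rpow_of_nonpos hypos (by linarith) (by linarith)
    _ = x ^ p + y ^ p := by
        rw [← key x hxpos, ← key y hypos, Real.rpow_one, Real.rpow_one]

private lemma integral_Ioo_rpow_eq {a b c : ℝ} (hc : -1 < c) (hab : a ≤ b) :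
    ∫ s in Ioo a b, s ^ c = (b ^ (c+1) - a ^ (c+1)) / (c+1) := by
  rw [← integral_Ioc_eq_integral_Ioo, ← intervalIntegral.integral_of_le hab]
  exact integral_rpow (Or.inl hc)

private lemma integrableOn_Ioo_rpow {a b c : ℝ} (hc : -1 < c) :
    IntegrableOn (fun s : ℝ => s ^ c) (Ioo a b) volume :=
  ((intervalIntegral.intervalIntegrable_rpow' hc (a := a) (b := b)).1).mono_set
    Ioo_subset_Ioc_self

private lemma integral_Ioo_rpow_le {a b K c : ℝ} (hc : -1 < c) (hab : a ≤ b)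
    (h : ∀ s ∈ Ioo a b, s ^ c ≤ K) :
    ∫ s in Ioo a b, s ^ c ≤ K * (b - a) := by
  calc ∫ s in Ioo a b, s ^ c ≤ ∫ _ in Ioo a b, K :=
        setIntegral_mono_on (integrableOn_Ioo_rpow hc)
          (integrableOn_const measure_Ioo_lt_top.ne) measurableSet_Ioo h
    _ = (b - a) * K := by
        rw [setIntegral_const, measureReal_def, Real.volume_Ioo, smul_eq_mul,
          ENNReal.toReal_ofReal (by linarith)]
    _ = K * (b - a) := mul_comm _ _

private lemma le_integral_Ioo_rpow {a b K c : ℝ} (hc : -1 < c) (hab : a ≤ b)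
    (h : ∀ s ∈ Ioo a b, K ≤ s ^ c) :
    K * (b - a) ≤ ∫ s in Ioo a b, s ^ c := by
  calc K * (b - a) = (b - a) * K := mul_comm _ _
    _ = ∫ _ in Ioo a b, K := by
        rw [setIntegral_const, measureReal_def, Real.volume_Ioo, smul_eq_mul,
          ENNReal.toReal_ofReal (by linarith)]
    _ ≤ ∫ s in Ioo a b, s ^ c :=
        setIntegral_mono_on (integrableOn_const measure_Ioo_lt_top.ne)
          (integrableOn_Ioo_rpow hc) measurableSet_Ioo h

/-- `V ((x,y), r) = ω_N r^N ∫_{max(y-r,0)}^{y+r} s^c ds`, the μ-measure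
(`dμ = y^c dx dy`) of the cylindrical ball `B(x,r) × (max(y-r,0), y+r)`. -/
noncomputable def V (N : ℕ) (c y₀ r : ℝ) : ℝ :=
  (volume (Metric.ball (0 : EuclideanSpace ℝ (Fin N)) 1)).toReal * r ^ N *
    ∫ s in Ioo (max (y₀ - r) 0) (y₀ + r), s ^ c

/-- Lemma 2.7 (local estimate for `V`): for fixed `r₀, R₀ > 0` there are
`C₁, C₂ > 0` with `C₂ r^{N+1+c⁺} ≤ V((x,y),r) ≤ C₁ r^{N+1-c⁻}` for
`r ∈ [0,r₀]`, `y ∈ [0,R₀]`. -/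
theorem stmt_4 (N : ℕ) (c : ℝ) (hc : c + 1 > 0) (r₀ R₀ : ℝ) (hr₀ : 0 < r₀) (hR₀ : 0 < R₀) :
    ∃ C₁ > (0:ℝ), ∃ C₂ > (0:ℝ), ∀ r y : ℝ, r ∈ Icc 0 r₀ → y ∈ Icc 0 R₀ →
      C₂ * r ^ ((N : ℝ) + 1 + max c 0) ≤ V N c y r ∧
      V N c y r ≤ C₁ * r ^ ((N : ℝ) + 1 - max (-c) 0) := by
  have hc' : (0:ℝ) < c + 1 := hc
  have hcm1 : -1 < c := by linarith
  have hN0 : (0:ℝ) ≤ (N:ℝ) := Nat.cast_nonneg N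
  set ω := (volume (Metric.ball (0 : EuclideanSpace ℝ (Fin N)) 1)).toReal with hω
  have hωpos : 0 < ω := ENNReal.toReal_pos (Metric.measure_ball_pos _ _ one_pos).ne'
    measure_ball_lt_top.ne
  set K := R₀ + r₀ with hKdef
  have hKpos : (0:ℝ) < K := by positivity
  have hVzero : ∀ y : ℝ, 0 ≤ y → V N c y 0 = 0 := by
    intro y hy
    unfold V
    rw [sub_zero, add_zero, max_eq_left hy, Ioo_self]
    simp
  rcases le_or_gt 0 c with hc0 | hc0
  · -- case 0 ≤ c
    refine ⟨ω * (2 * K ^ c), by positivity, ω / (c + 1), by positivity, ?_⟩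
    rintro r y ⟨hr0, hrr⟩ ⟨hy0, hyR⟩
    rw [max_eq_left hc0, max_eq_right (by linarith : -c ≤ 0), sub_zero]
    rcases eq_or_lt_of_le hr0 with h0 | hrpos
    · rw [← h0, hVzero y hy0,
        Real.zero_rpow (by positivity : ((N:ℝ) + 1 + c) ≠ 0),
        Real.zero_rpow (by positivity : ((N:ℝ) + 1) ≠ 0)]
      norm_num
    -- r > 0
    set a := max (y - r) 0 with hadef
    set b := y + r with hbdef
    have ha0 : 0 ≤ a := le_max_right _ _
    have hay : a ≤ y := max_le (by linarith) hy0
    have har : y - r ≤ a := le_max_left _ _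
    have hab : a ≤ b := by simp only [hbdef]; linarith
    have hbK : b ≤ K := by simp only [hbdef, hKdef]; linarith
    have hba1 : r ≤ b - a := by simp only [hbdef]; linarith
    have hba2 : b - a ≤ 2 * r := by simp only [hbdef]; linarith
    have hVeq : V N c y r = ω * r ^ N * ∫ s in Ioo a b, s ^ c := rfl
    rw [hVeq]
    constructor
    · -- lower bound
      have hI : r ^ (c+1) / (c+1) ≤ ∫ s in Ioo a b, s ^ c := by
        rw [integral_Ioo_rpow_eq hcm1 hab]
        have h1 : a ^ (c+1) + (b - a) ^ (c+1) ≤ b ^ (c+1) := by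
          have := rpow_superadd ha0 (by linarith : (0:ℝ) ≤ b - a) (by linarith : 1 ≤ c + 1)
          rwa [show a + (b - a) = b by ring] at this
        have h2 : r ^ (c+1) ≤ (b - a) ^ (c+1) :=
          Real.rpow_le_rpow hr0 hba1 (by linarith)
        have h3 : (0:ℝ) ≤ a ^ (c+1) := Real.rpow_nonneg ha0 _
        gcongr
        linarith
      have hre : r ^ ((N:ℝ) + 1 + c) = r ^ N * r ^ (c+1) := by
        rw [show (N:ℝ) + 1 + c = (N:ℝ) + (c + 1) by ring, Real.rpow_add hrpos,
          Real.rpow_natCast]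
      rw [hre]
      calc ω / (c+1) * (r ^ N * r ^ (c+1)) = (ω * r ^ N) * (r ^ (c+1) / (c+1)) := by ring
        _ ≤ (ω * r ^ N) * ∫ s in Ioo a b, s ^ c :=
            mul_le_mul_of_nonneg_left hI (by positivity)
        _ = ω * r ^ N * ∫ s in Ioo a b, s ^ c := by ring
    · -- upper bound
      have hI : (∫ s in Ioo a b, s ^ c) ≤ K ^ c * (2 * r) := by
        have h1 : (∫ s in Ioo a b, s ^ c) ≤ K ^ c * (b - a) := by
          refine integral_Ioo_rpow_le hcm1 hab (fun s hs => ?_)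
          exact Real.rpow_le_rpow (ha0.trans hs.1.le) (hs.2.le.trans hbK) hc0
        calc (∫ s in Ioo a b, s ^ c) ≤ K ^ c * (b - a) := h1
          _ ≤ K ^ c * (2 * r) := mul_le_mul_of_nonneg_left hba2 (by positivity)
      have hre : r ^ ((N:ℝ) + 1) = r ^ N * r := by
        rw [Real.rpow_add hrpos, Real.rpow_natCast, Real.rpow_one]
      rw [hre]
      calc ω * r ^ N * ∫ s in Ioo a b, s ^ c ≤ (ω * r ^ N) * (K ^ c * (2 * r)) :=
            mul_le_mul_of_nonneg_left hI (by positivity)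
        _ = ω * (2 * K ^ c) * (r ^ N * r) := by ring
  · -- case c < 0
    refine ⟨ω * (2 ^ (c+1) / (c + 1)), by positivity, ω * K ^ c, by positivity, ?_⟩
    rintro r y ⟨hr0, hrr⟩ ⟨hy0, hyR⟩
    rw [max_eq_right hc0.le, max_eq_left (by linarith : 0 ≤ -c), add_zero,
      show (N:ℝ) + 1 - -c = (N:ℝ) + (c + 1) by ring]
    rcases eq_or_lt_of_le hr0 with h0 | hrpos
    · rw [← h0, hVzero y hy0,
        Real.zero_rpow (by positivity : ((N:ℝ) + 1) ≠ 0),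
        Real.zero_rpow (by positivity : ((N:ℝ) + (c + 1)) ≠ 0)]
      norm_num
    set a := max (y - r) 0 with hadef
    set b := y + r with hbdef
    have ha0 : 0 ≤ a := le_max_right _ _
    have hay : a ≤ y := max_le (by linarith) hy0
    have har : y - r ≤ a := le_max_left _ _
    have hab : a ≤ b := by simp only [hbdef]; linarith
    have hbK : b ≤ K := by simp only [hbdef, hKdef]; linarith
    have hba1 : r ≤ b - a := by simp only [hbdef]; linarith
    have hba2 : b - a ≤ 2 * r := by simp only [hbdef]; linarith
    have hVeq : V N c y r = ω * r ^ N * ∫ s in Ioo a b, s ^ c := rfl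
    rw [hVeq]
    constructor
    · -- lower bound
      have hI : K ^ c * r ≤ ∫ s in Ioo a b, s ^ c := by
        have h1 : K ^ c * (b - a) ≤ ∫ s in Ioo a b, s ^ c := by
          refine le_integral_Ioo_rpow hcm1 hab (fun s hs => ?_)
          exact Real.rpow_le_rpow_of_nonpos (ha0.trans_lt hs.1) (hs.2.le.trans hbK) hc0.le
        calc K ^ c * r ≤ K ^ c * (b - a) := mul_le_mul_of_nonneg_left hba1 (by positivity)
          _ ≤ ∫ s in Ioo a b, s ^ c := h1
      have hre : r ^ ((N:ℝ) + 1) = r ^ N * r := by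
        rw [Real.rpow_add hrpos, Real.rpow_natCast, Real.rpow_one]
      rw [hre]
      calc ω * K ^ c * (r ^ N * r) = (ω * r ^ N) * (K ^ c * r) := by ring
        _ ≤ (ω * r ^ N) * ∫ s in Ioo a b, s ^ c :=
            mul_le_mul_of_nonneg_left hI (by positivity)
        _ = ω * r ^ N * ∫ s in Ioo a b, s ^ c := by ring
    · -- upper bound
      have hI : (∫ s in Ioo a b, s ^ c) ≤ 2 ^ (c+1) * r ^ (c+1) / (c+1) := by
        rw [integral_Ioo_rpow_eq hcm1 hab]
        have h1 : b ^ (c+1) ≤ a ^ (c+1) + (b - a) ^ (c+1) := by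
          have := rpow_subadd ha0 (by linarith : (0:ℝ) ≤ b - a) hc' (by linarith : c + 1 ≤ 1)
          rwa [show a + (b - a) = b by ring] at this
        have h2 : (b - a) ^ (c+1) ≤ (2 * r) ^ (c+1) :=
          Real.rpow_le_rpow (by linarith) hba2 hc'.le
        have h3 : (2 * r) ^ (c+1) = 2 ^ (c+1) * r ^ (c+1) :=
          Real.mul_rpow (by norm_num) hr0
        gcongr
        rw [← h3]
        linarith
      have hre : r ^ ((N:ℝ) + (c + 1)) = r ^ N * r ^ (c+1) := by
        rw [Real.rpow_add hrpos, Real.rpow_natCast]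
      rw [hre]
      calc ω * r ^ N * ∫ s in Ioo a b, s ^ c ≤ (ω * r ^ N) * (2 ^ (c+1) * r ^ (c+1) / (c+1)) :=
            mul_le_mul_of_nonneg_left hI (by positivity)
        _ = ω * (2 ^ (c+1) / (c + 1)) * (r ^ N * r ^ (c+1)) := by ring
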